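/- Let Ψ : ℝ^m × ℝⁿ → ℝⁿ be continuously differentiable and let L_s ∈ (0,1) be such that for every (x,y) ∈ ℝ^m × ℝⁿ the partial Fréchet derivative D_yΨ(x,y) (the derivative of the map y ↦ Ψ(x,y)) has operator norm at most L_s. Then there exists a unique function g : ℝ^m → ℝⁿ satisfying g(x) = Ψ(x, g(x)) for all x ∈ ℝ^m; moreover g is continuously differentiable, and for every x ∈ ℝ^m and every v ∈ ℝ^m its derivative satisfies (id − D_yΨ(x, g(x)))(Dg(x)·v) = D_xΨ(x, g(x))·v, i.e. Dg(x) = (id − D_yΨ(x,g(x)))⁻¹ ∘ D_xΨ(x,g(x)), where id − D_yΨ(x,g(x)) is invertible. -/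

import Mathlib

/-- Implicit function theorem for parametric contraction fixed points: if `Ψ` is `C¹` and
`‖D_yΨ(x,y)‖ ≤ L_s < 1` everywhere, then the fixed-point map `g` (with `g(x) = Ψ(x,g(x))`)
exists, is unique, is `C¹`, the linear map `id - D_yΨ(x,g(x))` is invertible, and the
derivative of `g` satisfies `(id - D_yΨ(x,g(x))) (Dg(x) v) = D_xΨ(x,g(x)) v`. -/
theorem stmt_7 {m n : ℕ}
    (Ψ : EuclideanSpace ℝ (Fin m) × EuclideanSpace ℝ (Fin n) → EuclideanSpace ℝ (Fin n))
    (hΨ : ContDiff ℝ 1 Ψ) (Ls : ℝ) (hLs0 : 0 < Ls) (hLs1 : Ls < 1)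
    (hD : ∀ (x : EuclideanSpace ℝ (Fin m)) (y : EuclideanSpace ℝ (Fin n)),
      ‖fderiv ℝ (fun y' => Ψ (x, y')) y‖ ≤ Ls) :
    ∃ g : EuclideanSpace ℝ (Fin m) → EuclideanSpace ℝ (Fin n),
      (∀ x, g x = Ψ (x, g x)) ∧
      (∀ g' : EuclideanSpace ℝ (Fin m) → EuclideanSpace ℝ (Fin n),
        (∀ x, g' x = Ψ (x, g' x)) → g' = g) ∧
      ContDiff ℝ 1 g ∧
      (∀ x : EuclideanSpace ℝ (Fin m),
        Function.Bijective
          ⇑(ContinuousLinearMap.id ℝ (EuclideanSpace ℝ (Fin n))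
              - fderiv ℝ (fun y' => Ψ (x, y')) (g x))) ∧
      ∀ (x : EuclideanSpace ℝ (Fin m)) (v : EuclideanSpace ℝ (Fin m)),
        (ContinuousLinearMap.id ℝ (EuclideanSpace ℝ (Fin n))
            - fderiv ℝ (fun y' => Ψ (x, y')) (g x)) (fderiv ℝ g x v)
          = fderiv ℝ (fun x' => Ψ (x', g x)) x v := by
  have hΨd : Differentiable ℝ Ψ := hΨ.differentiable one_ne_zero
  set K : NNReal := ⟨Ls, hLs0.le⟩ with hK
  have hK1 : K < 1 := by
    rw [← NNReal.coe_lt_coe]; exact hLs1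
  -- differentiability of the partial maps
  have hdiffy : ∀ (a : (EuclideanSpace ℝ (Fin m))), Differentiable ℝ (fun y : (EuclideanSpace ℝ (Fin n)) => Ψ (a, y)) := by
    intro a
    exact hΨd.comp ((differentiable_const a).prodMk differentiable_id)
  -- each map `y ↦ Ψ (a, y) + b` is a contraction
  have hcon : ∀ (a : (EuclideanSpace ℝ (Fin m))) (b : (EuclideanSpace ℝ (Fin n))), ContractingWith K (fun y : (EuclideanSpace ℝ (Fin n)) => Ψ (a, y) + b) := by
    intro a b
    refine ⟨hK1, ?_⟩
    apply lipschitzWith_of_nnnorm_fderiv_le (𝕜 := ℝ)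
    · exact fun y => ((hdiffy a y).add_const b)
    · intro y
      rw [← NNReal.coe_le_coe]
      have : fderiv ℝ (fun y : (EuclideanSpace ℝ (Fin n)) => Ψ (a, y) + b) y = fderiv ℝ (fun y : (EuclideanSpace ℝ (Fin n)) => Ψ (a, y)) y :=
        fderiv_add_const b
      rw [coe_nnnorm, this]
      exact hD a y
  -- the parametric fixed point
  set h : (EuclideanSpace ℝ (Fin m) × EuclideanSpace ℝ (Fin n)) → (EuclideanSpace ℝ (Fin n)) := fun p => ContractingWith.fixedPoint _ (hcon p.1 p.2) with hh
  have hfix : ∀ p : (EuclideanSpace ℝ (Fin m) × EuclideanSpace ℝ (Fin n)), Ψ (p.1, h p) + p.2 = h p := fun p =>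
    ContractingWith.fixedPoint_isFixedPt (hcon p.1 p.2)
  have huniq : ∀ (p : (EuclideanSpace ℝ (Fin m) × EuclideanSpace ℝ (Fin n))) (y : (EuclideanSpace ℝ (Fin n))), Ψ (p.1, y) + p.2 = y → y = h p := by
    intro p y hy
    exact ContractingWith.fixedPoint_unique (hcon p.1 p.2) hy
  -- the global change of variables
  set Φ : (EuclideanSpace ℝ (Fin m) × EuclideanSpace ℝ (Fin n)) → (EuclideanSpace ℝ (Fin m) × EuclideanSpace ℝ (Fin n)) := fun p => (p.1, p.2 - Ψ p) with hΦdef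
  set Φinv : (EuclideanSpace ℝ (Fin m) × EuclideanSpace ℝ (Fin n)) → (EuclideanSpace ℝ (Fin m) × EuclideanSpace ℝ (Fin n)) := fun p => (p.1, h p) with hΦinvdef
  have hright : ∀ p : (EuclideanSpace ℝ (Fin m) × EuclideanSpace ℝ (Fin n)), Φ (Φinv p) = p := by
    intro p
    have := hfix p
    simp only [hΦdef, hΦinvdef]
    ext1
    · rfl
    · exact sub_eq_of_eq_add' this.symm
  have hleft : ∀ q : (EuclideanSpace ℝ (Fin m) × EuclideanSpace ℝ (Fin n)), Φinv (Φ q) = q := by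
    intro q
    have hq : Ψ ((Φ q).1, q.2) + (Φ q).2 = q.2 := by
      simp only [hΦdef]
      have : (q.1, q.2) = q := Prod.mk.eta
      rw [this]; abel
    have := huniq (Φ q) q.2 hq
    simp only [hΦinvdef]
    ext1
    · rfl
    · exact this.symm
  -- partial derivatives via the full derivative
  have hA : ∀ (a : (EuclideanSpace ℝ (Fin m))) (b : (EuclideanSpace ℝ (Fin n))), fderiv ℝ (fun y : (EuclideanSpace ℝ (Fin n)) => Ψ (a, y)) b
      = (fderiv ℝ Ψ (a, b)).comp (((0 : (EuclideanSpace ℝ (Fin n)) →L[ℝ] (EuclideanSpace ℝ (Fin m)))).prod (ContinuousLinearMap.id ℝ (EuclideanSpace ℝ (Fin n)))) := by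
    intro a b
    have h1 : HasFDerivAt (fun y : (EuclideanSpace ℝ (Fin n)) => (a, y))
        (((0 : (EuclideanSpace ℝ (Fin n)) →L[ℝ] (EuclideanSpace ℝ (Fin m)))).prod (ContinuousLinearMap.id ℝ (EuclideanSpace ℝ (Fin n)))) b :=
      HasFDerivAt.prodMk (hasFDerivAt_const a b) (hasFDerivAt_id b)
    exact ((hΨd (a, b)).hasFDerivAt.comp b h1).fderiv
  have hB : ∀ (a : (EuclideanSpace ℝ (Fin m))) (b : (EuclideanSpace ℝ (Fin n))), fderiv ℝ (fun x' : (EuclideanSpace ℝ (Fin m)) => Ψ (x', b)) a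
      = (fderiv ℝ Ψ (a, b)).comp ((ContinuousLinearMap.id ℝ (EuclideanSpace ℝ (Fin m))).prod (0 : (EuclideanSpace ℝ (Fin m)) →L[ℝ] (EuclideanSpace ℝ (Fin n)))) := by
    intro a b
    have h1 : HasFDerivAt (fun x' : (EuclideanSpace ℝ (Fin m)) => (x', b))
        ((ContinuousLinearMap.id ℝ (EuclideanSpace ℝ (Fin m))).prod (0 : (EuclideanSpace ℝ (Fin m)) →L[ℝ] (EuclideanSpace ℝ (Fin n)))) a :=
      HasFDerivAt.prodMk (hasFDerivAt_id a) (hasFDerivAt_const b a)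
    exact ((hΨd (a, b)).hasFDerivAt.comp a h1).fderiv
  -- contraction bound kills vectors fixed by the partial derivative
  have hkill : ∀ (a : (EuclideanSpace ℝ (Fin m))) (b : (EuclideanSpace ℝ (Fin n))) (v : (EuclideanSpace ℝ (Fin n))), v = fderiv ℝ (fun y : (EuclideanSpace ℝ (Fin n)) => Ψ (a, y)) b v → v = 0 := by
    intro a b v hv
    by_contra hv0
    have h1 : ‖v‖ ≤ Ls * ‖v‖ := by
      calc ‖v‖ = ‖fderiv ℝ (fun y : (EuclideanSpace ℝ (Fin n)) => Ψ (a, y)) b v‖ := by rw [← hv]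
        _ ≤ ‖fderiv ℝ (fun y : (EuclideanSpace ℝ (Fin n)) => Ψ (a, y)) b‖ * ‖v‖ :=
            (fderiv ℝ (fun y : (EuclideanSpace ℝ (Fin n)) => Ψ (a, y)) b).le_opNorm v
        _ ≤ Ls * ‖v‖ := by
            apply mul_le_mul_of_nonneg_right (hD a b) (norm_nonneg v)
    have h2 : 0 < ‖v‖ := norm_pos_iff.mpr hv0
    nlinarith
  -- Φ is C¹ with invertible derivative everywhere
  have hΦC : ContDiff ℝ 1 Φ := contDiff_fst.prodMk (contDiff_snd.sub hΨ)
  have hΦinvCD : ∀ z : (EuclideanSpace ℝ (Fin m) × EuclideanSpace ℝ (Fin n)), ContDiffAt ℝ 1 Φinv z := by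
    intro z
    obtain ⟨q, hz⟩ : ∃ q, Φ q = z := ⟨Φinv z, hright z⟩
    set D' : (EuclideanSpace ℝ (Fin m) × EuclideanSpace ℝ (Fin n)) →L[ℝ] (EuclideanSpace ℝ (Fin m) × EuclideanSpace ℝ (Fin n)) :=
      (ContinuousLinearMap.fst ℝ (EuclideanSpace ℝ (Fin m)) (EuclideanSpace ℝ (Fin n))).prod
        ((ContinuousLinearMap.snd ℝ (EuclideanSpace ℝ (Fin m)) (EuclideanSpace ℝ (Fin n))) - fderiv ℝ Ψ q) with hD'
    have hDΦ : HasFDerivAt Φ D' q :=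
      HasFDerivAt.prodMk (hasFDerivAt_fst) (HasFDerivAt.sub (hasFDerivAt_snd) (hΨd q).hasFDerivAt)
    -- D' is injective
    have hinj : Function.Injective D' := by
      rw [← ContinuousLinearMap.coe_coe D']
      rw [← LinearMap.ker_eq_bot]
      rw [LinearMap.ker_eq_bot']
      intro p hp
      have hp' : D' p = 0 := hp
      have h1 : p.1 = 0 := congrArg Prod.fst hp'
      have h2 : p.2 - fderiv ℝ Ψ q p = 0 := congrArg Prod.snd hp'
      have h3 : p.2 = fderiv ℝ Ψ q (p.1, p.2) := by
        rw [Prod.mk.eta]; exact sub_eq_zero.mp h2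
      have h3' : p.2 = fderiv ℝ Ψ q (0, p.2) := by
        rw [← h1]; exact h3
      have h4 : p.2 = fderiv ℝ (fun y : (EuclideanSpace ℝ (Fin n)) => Ψ (q.1, y)) q.2 p.2 := by
        rw [hA q.1 q.2, Prod.mk.eta]
        simpa using h3'
      have h5 : p.2 = 0 := hkill q.1 q.2 p.2 h4
      exact Prod.ext h1 h5
    have hbij : Function.Bijective (D' : (EuclideanSpace ℝ (Fin m) × EuclideanSpace ℝ (Fin n)) →ₗ[ℝ] (EuclideanSpace ℝ (Fin m) × EuclideanSpace ℝ (Fin n))) :=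
      ⟨hinj, (LinearMap.injective_iff_surjective).mp hinj⟩
    set e : ((EuclideanSpace ℝ (Fin m) × EuclideanSpace ℝ (Fin n))) ≃L[ℝ] ((EuclideanSpace ℝ (Fin m) × EuclideanSpace ℝ (Fin n))) :=
      (LinearEquiv.ofBijective (D' : (EuclideanSpace ℝ (Fin m) × EuclideanSpace ℝ (Fin n)) →ₗ[ℝ] (EuclideanSpace ℝ (Fin m) × EuclideanSpace ℝ (Fin n))) hbij).toContinuousLinearEquiv with he
    have hecoe : (e : (EuclideanSpace ℝ (Fin m) × EuclideanSpace ℝ (Fin n)) →L[ℝ] (EuclideanSpace ℝ (Fin m) × EuclideanSpace ℝ (Fin n))) = D' := by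
      exact ContinuousLinearMap.ext fun p => rfl
    have hDΦe : HasFDerivAt Φ (e : (EuclideanSpace ℝ (Fin m) × EuclideanSpace ℝ (Fin n)) →L[ℝ] (EuclideanSpace ℝ (Fin m) × EuclideanSpace ℝ (Fin n))) q := by rw [hecoe]; exact hDΦ
    have hΦq : ContDiffAt ℝ 1 Φ q := hΦC.contDiffAt
    have hloc : ContDiffAt ℝ 1 (hΦq.localInverse hDΦe one_ne_zero) (Φ q) :=
      hΦq.to_localInverse hDΦe one_ne_zero
    have hev : ∀ᶠ y in nhds (Φ q), Φinv y = (hΦq.localInverse hDΦe one_ne_zero) y :=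
      (hΦq.hasStrictFDerivAt' hDΦe one_ne_zero).localInverse_unique
        (Filter.Eventually.of_forall hleft)
    rw [hz] at hloc hev
    exact hloc.congr_of_eventuallyEq hev
  have hΦinvC : ContDiff ℝ 1 Φinv := contDiff_iff_contDiffAt.mpr hΦinvCD
  -- define g
  set g : (EuclideanSpace ℝ (Fin m)) → (EuclideanSpace ℝ (Fin n)) := fun x => h (x, 0) with hg
  have hgfix : ∀ x : (EuclideanSpace ℝ (Fin m)), g x = Ψ (x, g x) := by
    intro x
    have := hfix (x, 0)
    simp only [add_zero] at this
    exact this.symm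
  have hgC : ContDiff ℝ 1 g := by
    have : g = fun x => (Φinv (x, (0 : (EuclideanSpace ℝ (Fin n))))).2 := rfl
    rw [this]
    exact contDiff_snd.comp (hΦinvC.comp (contDiff_id.prodMk contDiff_const))
  refine ⟨g, hgfix, ?_, hgC, ?_, ?_⟩
  · -- uniqueness
    intro g' hg'
    funext x
    have : Ψ (x, g' x) + 0 = g' x := by rw [add_zero]; exact (hg' x).symm
    exact huniq (x, 0) (g' x) this
  · -- bijectivity of id - A
    intro x
    set A := fderiv ℝ (fun y' : (EuclideanSpace ℝ (Fin n)) => Ψ (x, y')) (g x) with hAx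
    have hAn : ‖A‖ < 1 := lt_of_le_of_lt (hD x (g x)) hLs1
    set u : ((EuclideanSpace ℝ (Fin n)) →L[ℝ] (EuclideanSpace ℝ (Fin n)))ˣ := Units.oneSub A hAn with hu
    have hid : ContinuousLinearMap.id ℝ (EuclideanSpace ℝ (Fin n)) - A = u.val := rfl
    rw [hid]
    refine Function.bijective_iff_has_inverse.mpr ⟨u.inv, ?_, ?_⟩
    · intro y
      show u.inv (u.val y) = y
      have h1 : (u.inv * u.val) y = (1 : (EuclideanSpace ℝ (Fin n)) →L[ℝ] (EuclideanSpace ℝ (Fin n))) y := by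
        rw [u.inv_val]
      exact h1
    · intro y
      show u.val (u.inv y) = y
      have h1 : (u.val * u.inv) y = (1 : (EuclideanSpace ℝ (Fin n)) →L[ℝ] (EuclideanSpace ℝ (Fin n))) y := by
        rw [u.val_inv]
      exact h1
  · -- derivative identity
    intro x v
    have hgd : Differentiable ℝ g := hgC.differentiable one_ne_zero
    set D := fderiv ℝ Ψ (x, g x) with hDx
    set G := fderiv ℝ g x with hG
    have hcomp : HasFDerivAt (fun x' : (EuclideanSpace ℝ (Fin m)) => Ψ (x', g x'))
        (D.comp ((ContinuousLinearMap.id ℝ (EuclideanSpace ℝ (Fin m))).prod G)) x := by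
      have hin : HasFDerivAt (fun x' : (EuclideanSpace ℝ (Fin m)) => (x', g x'))
          ((ContinuousLinearMap.id ℝ (EuclideanSpace ℝ (Fin m))).prod G) x :=
        HasFDerivAt.prodMk (hasFDerivAt_id x) (hgd x).hasFDerivAt
      exact (hΨd (x, g x)).hasFDerivAt.comp x hin
    have hfun : (fun x' : (EuclideanSpace ℝ (Fin m)) => Ψ (x', g x')) = g := funext fun x' => (hgfix x').symm
    rw [hfun] at hcomp
    have hGeq : G = D.comp ((ContinuousLinearMap.id ℝ (EuclideanSpace ℝ (Fin m))).prod G) := by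
      rw [hG]; exact hcomp.fderiv
    have hGv : G v = D (v, G v) := by
      conv_lhs => rw [hGeq]
      rfl
    have hsplit : D (v, G v) = D (v, 0) + D (0, G v) := by
      rw [← map_add]
      congr 1
      simp [Prod.mk_add_mk]
    have hAv : fderiv ℝ (fun y' : (EuclideanSpace ℝ (Fin n)) => Ψ (x, y')) (g x) (G v) = D (0, G v) := by
      rw [hA x (g x)]
      rfl
    have hBv : fderiv ℝ (fun x' : (EuclideanSpace ℝ (Fin m)) => Ψ (x', g x)) x v = D (v, 0) := by
      rw [hB x (g x)]
      rfl
    simp only [ContinuousLinearMap.sub_apply, ContinuousLinearMap.id_apply]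
    rw [hAv, hBv]
    exact sub_eq_of_eq_add (hGv.trans hsplit)
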